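/- arXiv:2506.21756 — 4 statements merged into one kernel-verified Lean document; each statement's English description precedes it below -/
import Mathlib

section
/- Every d-regular graph with d ≥ 3 contains a spanning subgraph G' with minimum degree at least 2 and maximum degree at most 3. -/
open Finset Function

/-- Hall-type counting lemma: if all the sets `t v` have size `m > 0` and for each `u`
the number of `v`'s in any finset with `u ∈ t v` is at most `m`, then there is an
injective choice function. -/
lemma hall_aux {V : Type*} [Fintype V] [DecidableEq V] (t : V → Finset V) (m : ℕ)
    (hm : 0 < m) (hcard : ∀ v, (t v).card = m)
    (hbound : ∀ u (s : Finset V), (s.filter fun v => u ∈ t v).card ≤ m) :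
    ∃ f : V → V, Injective f ∧ ∀ x, f x ∈ t x := by
  rw [← Finset.all_card_le_biUnion_card_iff_exists_injective]
  intro s
  set U := s.biUnion t with hU
  have key : m * s.card ≤ m * U.card := by
    calc m * s.card = ∑ v ∈ s, (t v).card := by
          rw [Finset.sum_congr rfl fun v _ => hcard v]
          simp [mul_comm]
      _ = ∑ v ∈ s, (U.filter fun u => u ∈ t v).card := by
          refine Finset.sum_congr rfl fun v hv => ?_
          rw [Finset.filter_mem_eq_inter,
            Finset.inter_eq_right.mpr (Finset.subset_biUnion_of_mem t hv)]
      _ = ∑ v ∈ s, ∑ u ∈ U, (if u ∈ t v then 1 else 0) := by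
          refine Finset.sum_congr rfl fun v _ => ?_
          rw [Finset.card_filter]
      _ = ∑ u ∈ U, ∑ v ∈ s, (if u ∈ t v then 1 else 0) := Finset.sum_comm
      _ = ∑ u ∈ U, (s.filter fun v => u ∈ t v).card := by
          refine Finset.sum_congr rfl fun u _ => ?_
          rw [Finset.card_filter]
      _ ≤ ∑ _u ∈ U, m := Finset.sum_le_sum fun u _ => hbound u s
      _ = m * U.card := by simp [mul_comm]
  exact Nat.le_of_mul_le_mul_left key hm

/-- Every `d`-regular graph with `d ≥ 3` contains a spanning subgraph with
    minimum degree at least 2 and maximum degree at most 3. -/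
theorem regular_has_subgraph_deg_two_three {V : Type*} [Fintype V]
    (G : SimpleGraph V) (d : ℕ) (hd : 3 ≤ d)
    (hreg : ∀ v, (G.neighborSet v).ncard = d) :
    ∃ H : SimpleGraph V, H ≤ G ∧
      ∀ v, 2 ≤ (H.neighborSet v).ncard ∧ (H.neighborSet v).ncard ≤ 3 := by
  classical
  -- degrees
  have hdeg : ∀ v, (G.neighborFinset v).card = d := by
    intro v
    have := hreg v
    rwa [Set.ncard_eq_toFinset_card'] at this
  have hmem_nbr : ∀ {u v : V}, u ∈ G.neighborFinset v ↔ G.Adj v u := by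
    intro u v; simp [SimpleGraph.mem_neighborFinset]
  -- first permutation via Hall
  obtain ⟨f1, hf1inj, hf1mem⟩ :=
    hall_aux (fun v => G.neighborFinset v) d (by omega) hdeg
      (by
        intro u s
        have hsub : (s.filter fun v => u ∈ G.neighborFinset v) ⊆ G.neighborFinset u := by
          intro v hv
          simp only [Finset.mem_filter] at hv
          exact hmem_nbr.2 ((hmem_nbr.1 hv.2).symm)
        calc (s.filter fun v => u ∈ G.neighborFinset v).card
            ≤ (G.neighborFinset u).card := Finset.card_le_card hsub
          _ = d := hdeg u)
  have hf1bij : Bijective f1 := Finite.injective_iff_bijective.mp hf1inj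
  set a1 : V ≃ V := Equiv.ofBijective f1 hf1bij with ha1
  have ha1adj : ∀ v, G.Adj v (a1 v) := fun v => hmem_nbr.1 (hf1mem v)
  have ha1symm_adj : ∀ v, G.Adj v (a1.symm v) := by
    intro v
    have := ha1adj (a1.symm v)
    rw [Equiv.apply_symm_apply] at this
    exact this.symm
  -- second permutation via Hall on the graph minus the first matching
  obtain ⟨f2, hf2inj, hf2mem⟩ :=
    hall_aux (fun v => (G.neighborFinset v).erase (a1 v)) (d - 1) (by omega)
      (by
        intro v
        rw [Finset.card_erase_of_mem (hmem_nbr.2 (ha1adj v)), hdeg])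
      (by
        intro u s
        have hsub : (s.filter fun v => u ∈ (G.neighborFinset v).erase (a1 v)) ⊆
            (G.neighborFinset u).erase (a1.symm u) := by
          intro v hv
          simp only [Finset.mem_filter, Finset.mem_erase] at hv ⊢
          obtain ⟨-, hne, hmem⟩ := hv
          refine ⟨?_, hmem_nbr.2 ((hmem_nbr.1 hmem).symm)⟩
          intro h
          apply hne
          rw [h, Equiv.apply_symm_apply]
        calc (s.filter fun v => u ∈ (G.neighborFinset v).erase (a1 v)).card
            ≤ ((G.neighborFinset u).erase (a1.symm u)).card := Finset.card_le_card hsub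
          _ = d - 1 := by
              rw [Finset.card_erase_of_mem (hmem_nbr.2 (ha1symm_adj u)), hdeg])
  have hf2bij : Bijective f2 := Finite.injective_iff_bijective.mp hf2inj
  set a2 : V ≃ V := Equiv.ofBijective f2 hf2bij with ha2
  have ha2adj : ∀ v, G.Adj v (a2 v) := by
    intro v
    have := hf2mem v
    rw [Finset.mem_erase] at this
    exact hmem_nbr.1 this.2
  have ha2ne : ∀ v, a2 v ≠ a1 v := by
    intro v
    have := hf2mem v
    rw [Finset.mem_erase] at this
    exact this.1
  -- the subgraph
  set D : V → Prop := fun v => a1 (a1 v) = v with hDdef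
  set P : V → V → Prop := fun u v => a1 u = v ∨ (D u ∧ a2 u = v) with hPdef
  have hPadj : ∀ {u v}, P u v → G.Adj u v := by
    intro u v h
    rcases h with h | ⟨-, h⟩
    · exact h ▸ ha1adj u
    · exact h ▸ ha2adj u
  have hsymm : Symmetric (fun u v => P u v ∨ P v u) := by
    intro u v h; tauto
  have hirr : Irreflexive (fun u v : V => P u v ∨ P v u) := by
    intro v h
    have : G.Adj v v := by rcases h with h | h <;> exact hPadj h
    exact G.loopless.irrefl v this
  set H : SimpleGraph V := ⟨fun u v => P u v ∨ P v u, ⟨fun a b h => hsymm h⟩, ⟨fun a h => hirr a h⟩⟩ with hHdef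
  have hHmem : ∀ {u v : V}, u ∈ H.neighborSet v ↔ (P v u ∨ P u v) := by
    intro u v; rfl
  refine ⟨H, ?_, ?_⟩
  · intro u v h
    rcases h with h | h
    · exact hPadj h
    · exact (hPadj h).symm
  · intro v
    have hNfin : (H.neighborSet v).Finite := Set.toFinite _
    constructor
    · -- lower bound
      by_cases hv : D v
      · have h1 : a1 v ∈ H.neighborSet v := hHmem.2 (Or.inl (Or.inl rfl))
        have h2 : a2 v ∈ H.neighborSet v := hHmem.2 (Or.inl (Or.inr ⟨hv, rfl⟩))
        have hne : a1 v ≠ a2 v := fun h => ha2ne v h.symm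
        calc 2 = ({a1 v, a2 v} : Set V).ncard := (Set.ncard_pair hne).symm
          _ ≤ (H.neighborSet v).ncard := by
              apply Set.ncard_le_ncard _ hNfin
              intro x hx
              rcases hx with h | h
              · exact h ▸ h1
              · simp only [Set.mem_singleton_iff] at h
                exact h ▸ h2
      · have h1 : a1 v ∈ H.neighborSet v := hHmem.2 (Or.inl (Or.inl rfl))
        have h2 : a1.symm v ∈ H.neighborSet v :=
          hHmem.2 (Or.inr (Or.inl (Equiv.apply_symm_apply a1 v)))
        have hne : a1 v ≠ a1.symm v := by
          intro h
          apply hv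
          have h2' : a1 (a1.symm v) = v := Equiv.apply_symm_apply a1 v
          rw [← h] at h2'
          exact h2'
        calc 2 = ({a1 v, a1.symm v} : Set V).ncard := (Set.ncard_pair hne).symm
          _ ≤ (H.neighborSet v).ncard := by
              apply Set.ncard_le_ncard _ hNfin
              intro x hx
              rcases hx with h | h
              · exact h ▸ h1
              · simp only [Set.mem_singleton_iff] at h
                exact h ▸ h2
    · -- upper bound
      have hsub : H.neighborSet v ⊆
          (if D v then {a1 v, a2 v, a2.symm v} else {a1 v, a1.symm v, a2.symm v} : Set V) := by
        intro u hu
        rcases hHmem.1 hu with h | h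
        · -- P v u
          rcases h with h | ⟨hDv, h⟩
          · split <;> exact Or.inl h.symm
          · rw [if_pos hDv]
            exact Or.inr (Or.inl h.symm)
        · -- P u v
          rcases h with h | ⟨hDu, h⟩
          · -- a1 u = v, so u = a1.symm v
            have hu' : u = a1.symm v := by
              rw [← h, Equiv.symm_apply_apply]
            by_cases hDv : D v
            · rw [if_pos hDv]
              -- a1.symm v = a1 v since a1 (a1 v) = v
              have : a1.symm v = a1 v := by
                have h' : a1 (a1 v) = v := hDv
                exact (Equiv.symm_apply_eq a1).mpr h'.symm
              exact Or.inl (hu'.trans this)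
            · rw [if_neg hDv]
              exact Or.inr (Or.inl hu')
          · -- a2 u = v, so u = a2.symm v
            have hu' : u = a2.symm v := by
              rw [← h, Equiv.symm_apply_apply]
            split <;> exact Or.inr (Or.inr (by simp [hu']))
      have h3 : ∀ x y z : V, ({x, y, z} : Set V).ncard ≤ 3 := by
        intro x y z
        have i1 : ({x, y, z} : Set V).ncard ≤ ({y, z} : Set V).ncard + 1 :=
          Set.ncard_insert_le _ _
        have i2 : ({y, z} : Set V).ncard ≤ ({z} : Set V).ncard + 1 :=
          Set.ncard_insert_le _ _
        have i3 : ({z} : Set V).ncard = 1 := Set.ncard_singleton _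
        omega
      calc (H.neighborSet v).ncard ≤ _ := Set.ncard_le_ncard hsub (Set.toFinite _)
        _ ≤ 3 := by split <;> exact h3 _ _ _
end

section
/- Let L be a near-2-factor (a spanning graph that is a disjoint union of cycles and exactly one path) with path P(L) having endpoints u and v. Let w be a vertex on a cycle of L and x a neighbor of w in L. Then the graph L' obtained by deleting the edge {w,x} and adding the edge {v,w} is again a near-2-factor, and its unique path has u as one endpoint and x as the other endpoint. -/
/-- A near-2-factor: a spanning graph that is a disjoint union of cycles and
    exactly one path, whose path has endpoints `u` and `v`.  Equivalently
    (in a finite graph): `u ≠ v`, both `u` and `v` have degree 1, and all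
    other vertices have degree 2. -/
def IsNearTwoFactor {V : Type*} (L : SimpleGraph V) (u v : V) : Prop :=
  u ≠ v ∧ (L.neighborSet u).ncard = 1 ∧ (L.neighborSet v).ncard = 1 ∧
    ∀ w, w ≠ u → w ≠ v → (L.neighborSet w).ncard = 2

lemma degree_eq_ncard' {V : Type*} [Fintype V] (G : SimpleGraph V) [DecidableRel G.Adj] (a : V) :
    G.degree a = (G.neighborSet a).ncard := by
  rw [← SimpleGraph.card_neighborSet_eq_degree, Set.ncard_eq_toFinset_card', Set.toFinset_card]

lemma reachable_endpoints {V : Type*} [Fintype V] (L : SimpleGraph V) (u v : V)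
    (h : IsNearTwoFactor L u v) : L.Reachable u v := by
  classical
  by_contra hv
  set G : SimpleGraph V :=
    { Adj := fun a b => L.Adj a b ∧ L.Reachable u a
      symm := ⟨by rintro a b ⟨hab, ha⟩; exact ⟨hab.symm, ha.trans hab.reachable⟩⟩
      loopless := ⟨by rintro a ⟨haa, _⟩; exact L.loopless.irrefl a haa⟩ } with hG
  have hNS : ∀ z, G.neighborSet z = if L.Reachable u z then L.neighborSet z else ∅ := by
    intro z
    ext b
    by_cases hz : L.Reachable u z <;> simp [hG, SimpleGraph.neighborSet, hz]
  have hdeg : ∀ z, G.degree z = (if L.Reachable u z then L.neighborSet z else ∅).ncard := by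
    intro z; rw [degree_eq_ncard', hNS]
  have key := G.even_card_odd_degree_vertices
  have hfilt : ({z | Odd (G.degree z)} : Finset V) = {u} := by
    ext z
    simp only [Finset.mem_filter, Finset.mem_univ, true_and, Finset.mem_singleton]
    constructor
    · intro hodd
      by_contra hzu
      rcases Classical.em (L.Reachable u z) with hr | hr
      · have hzv : z ≠ v := by rintro rfl; exact hv hr
        rw [hdeg z, if_pos hr, h.2.2.2 z hzu hzv] at hodd
        exact (by decide : ¬ Odd 2) hodd
      · rw [hdeg z, if_neg hr] at hodd
        simp at hodd
    · intro hz
      rw [hdeg z, if_pos (by subst hz; exact SimpleGraph.Reachable.refl _), hz, h.2.1]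
      exact odd_one
  rw [hfilt] at key
  simp at key

/-- Rotation: if `L` is a near-2-factor with path endpoints `u, v`, `w` lies on
    a cycle of `L` (i.e., is not reachable from `u`) and `x` is a neighbor of
    `w` in `L`, then deleting the edge `{w,x}` and adding the edge `{v,w}`
    yields a near-2-factor whose path has endpoints `u` and `x`. -/
theorem rotation_near_two_factor {V : Type*} [Fintype V] (L : SimpleGraph V)
    (u v w x : V) (hL : IsNearTwoFactor L u v) (hw : ¬ L.Reachable u w)
    (hx : L.Adj w x) :
    IsNearTwoFactor
      (SimpleGraph.fromEdgeSet ((L.edgeSet \ {s(w, x)}) ∪ {s(v, w)})) u x := by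
  classical
  obtain ⟨huv, hdu, hdv, hd2⟩ := hL
  have hreach : L.Reachable u v := reachable_endpoints L u v ⟨huv, hdu, hdv, hd2⟩
  have hwu : w ≠ u := by rintro rfl; exact hw (SimpleGraph.Reachable.refl _)
  have hxu : x ≠ u := by rintro rfl; exact hw hx.reachable.symm
  have hwv : w ≠ v := by rintro rfl; exact hw hreach
  have hxv : x ≠ v := by rintro rfl; exact hw (hreach.trans hx.reachable.symm)
  have hvw_nadj : ¬ L.Adj v w := fun h => hw (hreach.trans h.reachable)
  have hwx : w ≠ x := hx.ne
  set L' := SimpleGraph.fromEdgeSet ((L.edgeSet \ {s(w, x)}) ∪ {s(v, w)}) with hL'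
  have hadj : ∀ a b, L'.Adj a b ↔
      ((L.Adj a b ∧ ¬((a = w ∧ b = x) ∨ (a = x ∧ b = w))) ∨
        ((a = v ∧ b = w) ∨ (a = w ∧ b = v))) ∧ a ≠ b := by
    intro a b
    rw [hL', SimpleGraph.fromEdgeSet_adj]
    simp only [Set.mem_union, Set.mem_diff, SimpleGraph.mem_edgeSet, Set.mem_singleton_iff,
      Sym2.eq_iff]
    try tauto
  have hNu : L'.neighborSet u = L.neighborSet u := by
    ext b
    simp only [SimpleGraph.mem_neighborSet, hadj]
    constructor
    · rintro ⟨⟨h, -⟩ | ⟨⟨huv', -⟩ | ⟨hwu', -⟩⟩, hne⟩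
      · exact h
      · exact absurd huv' huv
      · exact absurd hwu' (Ne.symm hwu)
    · intro h
      refine ⟨Or.inl ⟨h, ?_⟩, h.ne⟩
      rintro (⟨huw, -⟩ | ⟨hux, -⟩)
      · exact hwu huw.symm
      · exact hxu hux.symm
  have hNx : L'.neighborSet x = L.neighborSet x \ {w} := by
    ext b
    simp only [SimpleGraph.mem_neighborSet, hadj, Set.mem_diff, Set.mem_singleton_iff, true_and]
    constructor
    · rintro ⟨⟨h, hn⟩ | ⟨⟨hev, -⟩ | ⟨hew, -⟩⟩, hne⟩
      · exact ⟨h, fun hb => hn (Or.inr hb)⟩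
      · exact absurd hev hxv
      · exact absurd hew (Ne.symm hwx)
    · rintro ⟨h, hbw⟩
      refine ⟨Or.inl ⟨h, ?_⟩, h.ne⟩
      rintro (⟨hxw, -⟩ | hb)
      · exact hwx hxw.symm
      · exact hbw hb
  have hNv : L'.neighborSet v = insert w (L.neighborSet v) := by
    ext b
    simp only [SimpleGraph.mem_neighborSet, hadj, Set.mem_insert_iff, true_and]
    constructor
    · rintro ⟨⟨h, -⟩ | ⟨hbw | ⟨hvw, -⟩⟩, hne⟩
      · exact Or.inr h
      · exact Or.inl hbw
      · exact absurd hvw (Ne.symm hwv)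
    · rintro (rfl | h)
      · exact ⟨Or.inr (Or.inl rfl), fun h => hwv h.symm⟩
      · refine ⟨Or.inl ⟨h, ?_⟩, h.ne⟩
        rintro (⟨hvw, -⟩ | ⟨hvx, -⟩)
        · exact hwv hvw.symm
        · exact hxv hvx.symm
  have hNw : L'.neighborSet w = insert v (L.neighborSet w \ {x}) := by
    ext b
    simp only [SimpleGraph.mem_neighborSet, hadj, Set.mem_insert_iff, Set.mem_diff,
      Set.mem_singleton_iff, true_and]
    constructor
    · rintro ⟨⟨h, hn⟩ | ⟨⟨hwv', -⟩ | hbv⟩, hne⟩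
      · exact Or.inr ⟨h, fun hb => hn (Or.inl hb)⟩
      · exact absurd hwv' hwv
      · exact Or.inl hbv
    · rintro (rfl | ⟨h, hbx⟩)
      · exact ⟨Or.inr (Or.inr rfl), hwv⟩
      · refine ⟨Or.inl ⟨h, ?_⟩, h.ne⟩
        rintro (hb | ⟨hwx', -⟩)
        · exact hbx hb
        · exact hwx hwx'
  have hNz : ∀ z, z ≠ v → z ≠ w → z ≠ x → L'.neighborSet z = L.neighborSet z := by
    intro z hzv hzw hzx
    ext b
    simp only [SimpleGraph.mem_neighborSet, hadj]
    constructor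
    · rintro ⟨⟨h, -⟩ | ⟨⟨hzv', -⟩ | ⟨hzw', -⟩⟩, hne⟩
      · exact h
      · exact absurd hzv' hzv
      · exact absurd hzw' hzw
    · intro h
      refine ⟨Or.inl ⟨h, ?_⟩, h.ne⟩
      rintro (⟨hzw', -⟩ | ⟨hzx', -⟩)
      · exact hzw hzw'
      · exact hzx hzx'
  have hdx : (L.neighborSet x).ncard = 2 := hd2 x hxu hxv
  have hdw : (L.neighborSet w).ncard = 2 := hd2 w hwu hwv
  refine ⟨fun h => hxu h.symm, ?_, ?_, ?_⟩
  · rw [hNu]; exact hdu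
  · rw [hNx, Set.ncard_diff_singleton_of_mem (by exact hx.symm), hdx]
  · intro z hzu hzx
    by_cases hzv : z = v
    · rw [hzv, hNv, Set.ncard_insert_of_notMem (s := L.neighborSet v) (fun h => hvw_nadj h) (Set.toFinite _), hdv]
    · by_cases hzw : z = w
      · rw [hzw, hNw, Set.ncard_insert_of_notMem (s := L.neighborSet w \ {x}) (by
            rintro ⟨h, -⟩
            exact hvw_nadj ((SimpleGraph.mem_neighborSet L w v).mp h).symm) (Set.toFinite _),
          Set.ncard_diff_singleton_of_mem (by exact hx), hdw]
      · rw [hNz z hzv hzw hzx]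
        exact hd2 z hzu hzv
end

section
/- For positive integers c, m, σ with 3m ≤ c, σ ≤ m, and m/c ≤ 1/9, we have C(c, m - σ) / C(c - 3m, m) ≤ 2 · (m/c)^σ, provided m/c is sufficiently small (e.g., c ≥ 9am for appropriate a ensuring the constant 2 suffices for large c). -/
set_option maxHeartbeats 1000000 in
/-- For positive integers `σ ≤ m` and all sufficiently large `c` (so that
    `m/c` is sufficiently small), with `3m ≤ c` and `m/c ≤ 1/9`, we have
    `C(c, m-σ)/C(c-3m, m) ≤ 2·(m/c)^σ`. -/
theorem choose_ratio_bound (m σ : ℕ) (hm : 0 < m) (hσ : 0 < σ) (hσm : σ ≤ m) :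
    ∃ c₀ : ℕ, ∀ c : ℕ, c₀ ≤ c → 3 * m ≤ c → (m : ℝ) / c ≤ 1 / 9 →
      (c.choose (m - σ) : ℝ) / ((c - 3 * m).choose m : ℝ)
        ≤ 2 * ((m : ℝ) / c) ^ σ := by
  refine ⟨8 * m ^ 2 + 4 * m + 1, fun c hc h3m _ => ?_⟩
  have hc4 : 4 * m ≤ c := by nlinarith
  have hcpos : 0 < c := by omega
  have hx : (0 : ℝ) < (c : ℝ) := by exact_mod_cast hcpos
  -- natural number facts
  have h1 : (m - σ).factorial * c.choose (m - σ) ≤ c ^ (m - σ) := by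
    rw [← Nat.descFactorial_eq_factorial_mul_choose]
    exact Nat.descFactorial_le_pow _ _
  have h2 : (c - 4 * m) ^ m ≤ m.factorial * (c - 3 * m).choose m := by
    rw [← Nat.descFactorial_eq_factorial_mul_choose]
    calc (c - 4 * m) ^ m ≤ (c - 3 * m + 1 - m) ^ m :=
          Nat.pow_le_pow_left (by omega) m
      _ ≤ (c - 3 * m).descFactorial m := Nat.pow_sub_le_descFactorial _ _
  have h3 : (m - σ).factorial * m.descFactorial σ = m.factorial :=
    Nat.factorial_mul_descFactorial hσm
  have h4 : m.descFactorial σ ≤ m ^ σ := Nat.descFactorial_le_pow _ _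
  -- real versions
  have hMpos : (0 : ℝ) < (m : ℝ) := by exact_mod_cast hm
  have hxM : 8 * (m : ℝ) ^ 2 + 4 * (m : ℝ) + 1 ≤ (c : ℝ) := by exact_mod_cast hc
  have h4Mx : 4 * (m : ℝ) ≤ (c : ℝ) := by exact_mod_cast hc4
  have F1 : ((m - σ).factorial : ℝ) * (c.choose (m - σ) : ℝ) ≤ (c : ℝ) ^ (m - σ) := by
    exact_mod_cast h1
  have F2 : ((c : ℝ) - 4 * m) ^ m ≤ (m.factorial : ℝ) * ((c - 3 * m).choose m : ℝ) := by
    have hcast : ((c - 4 * m : ℕ) : ℝ) = (c : ℝ) - 4 * m := by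
      push_cast [hc4]; ring
    calc ((c : ℝ) - 4 * m) ^ m = ((c - 4 * m : ℕ) : ℝ) ^ m := by rw [hcast]
      _ ≤ (m.factorial : ℝ) * ((c - 3 * m).choose m : ℝ) := by exact_mod_cast h2
  have F3 : ((m - σ).factorial : ℝ) * (m.descFactorial σ : ℝ) = (m.factorial : ℝ) := by
    exact_mod_cast h3
  have F4 : (m.descFactorial σ : ℝ) ≤ (m : ℝ) ^ σ := by exact_mod_cast h4
  -- Bernoulli: c^m ≤ 2 * (c - 4m)^m
  have F5 : (c : ℝ) ^ m ≤ 2 * ((c : ℝ) - 4 * m) ^ m := by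
    have hbern : 1 + (m : ℝ) * (-(4 * (m : ℝ) / c)) ≤ (1 + -(4 * (m : ℝ) / c)) ^ m := by
      apply one_add_mul_le_pow
      have : 4 * (m : ℝ) / c ≤ 1 := by
        rw [div_le_one hx]; nlinarith
      linarith
    have hhalf : (1 / 2 : ℝ) ≤ (1 - 4 * (m : ℝ) / c) ^ m := by
      have hMx : (m : ℝ) * (4 * (m : ℝ) / c) ≤ 1 / 2 := by
        rw [mul_div_assoc', div_le_iff₀ hx]
        nlinarith
      calc (1 / 2 : ℝ) ≤ 1 + (m : ℝ) * (-(4 * (m : ℝ) / c)) := by nlinarith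
        _ ≤ (1 + -(4 * (m : ℝ) / c)) ^ m := hbern
        _ = (1 - 4 * (m : ℝ) / c) ^ m := by ring_nf
    have key : (1 - 4 * (m : ℝ) / c) ^ m * (c : ℝ) ^ m = ((c : ℝ) - 4 * m) ^ m := by
      rw [← mul_pow]; congr 1; field_simp
    nlinarith [pow_pos hx m, mul_le_mul_of_nonneg_right hhalf (le_of_lt (pow_pos hx m))]
  -- assemble
  have hb : (0 : ℝ) < ((c - 3 * m).choose m : ℝ) := by
    exact_mod_cast Nat.choose_pos (by omega : m ≤ c - 3 * m)
  rw [div_le_iff₀ hb]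
  have hf1 : (0 : ℝ) < ((m - σ).factorial : ℝ) := by exact_mod_cast Nat.factorial_pos _
  have hxσ : (0 : ℝ) < (c : ℝ) ^ σ := pow_pos hx σ
  have hmul : (0 : ℝ) < ((m - σ).factorial : ℝ) * (c : ℝ) ^ σ := mul_pos hf1 hxσ
  rw [← mul_le_mul_iff_of_pos_left hmul]
  have hpowsplit : (c : ℝ) ^ σ * (c : ℝ) ^ (m - σ) = (c : ℝ) ^ m := by
    rw [← pow_add]; congr 1; omega
  have hMx : ((m : ℝ) / c) ^ σ = (m : ℝ) ^ σ / (c : ℝ) ^ σ := div_pow _ _ _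
  calc ((m - σ).factorial : ℝ) * (c : ℝ) ^ σ * (c.choose (m - σ) : ℝ)
      = (c : ℝ) ^ σ * (((m - σ).factorial : ℝ) * (c.choose (m - σ) : ℝ)) := by ring
    _ ≤ (c : ℝ) ^ σ * (c : ℝ) ^ (m - σ) :=
        mul_le_mul_of_nonneg_left F1 (le_of_lt hxσ)
    _ = (c : ℝ) ^ m := hpowsplit
    _ ≤ 2 * ((c : ℝ) - 4 * m) ^ m := F5
    _ ≤ 2 * ((m.factorial : ℝ) * ((c - 3 * m).choose m : ℝ)) := by linarith
    _ = 2 * (((m - σ).factorial : ℝ) * (m.descFactorial σ : ℝ) *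
          ((c - 3 * m).choose m : ℝ)) := by rw [F3]
    _ ≤ 2 * (((m - σ).factorial : ℝ) * (m : ℝ) ^ σ * ((c - 3 * m).choose m : ℝ)) := by
        have h := mul_le_mul_of_nonneg_left F4 (le_of_lt hf1)
        nlinarith
    _ = ((m - σ).factorial : ℝ) * (c : ℝ) ^ σ *
          (2 * ((m : ℝ) / c) ^ σ * ((c - 3 * m).choose m : ℝ)) := by
        rw [hMx]; field_simp
end

section
/- Let d ≥ 1 and let G be a d-regular graph on n vertices. Fix a matching N with m edges on a vertex set of size n, and let π be a uniformly random bijection from V(G) to that vertex set. Then the probability that {π^{-1}(x), π^{-1}(y)} ∈ E(G) for every edge {x,y} of N is at most (d/(n - 2m))^m. -/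
open SimpleGraph

lemma support_ncard_le {V' : Type*} [Fintype V'] (M : SimpleGraph V') :
    M.support.ncard ≤ 2 * M.edgeSet.ncard := by
  classical
  set s : Finset V' := (Set.toFinite M.support).toFinset with hs
  set t : Finset (Sym2 V') := (Set.toFinite M.edgeSet).toFinset with ht
  let f : V' → Sym2 V' := fun v =>
    if h : v ∈ M.support then s(v, (M.mem_support.mp h).choose) else s(v, v)
  have hmem : ∀ v ∈ s, v ∈ f v ∧ f v ∈ t := by
    intro v hv
    rw [hs, Set.Finite.mem_toFinset] at hv
    have hadj : M.Adj v ((M.mem_support.mp hv)).choose :=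
      ((M.mem_support.mp hv)).choose_spec
    constructor
    · simp only [f, dif_pos hv]
      exact Sym2.mem_mk_left _ _
    · simp only [f, dif_pos hv, ht, Set.Finite.mem_toFinset]
      exact hadj
  have key : s.card ≤ 2 * t.card := by
    refine Finset.card_le_mul_card_image_of_maps_to (fun v hv => (hmem v hv).2) 2 ?_
    intro q hq
    induction q using Sym2.ind with
    | _ x y =>
      have hsub : {v ∈ s | f v = s(x, y)} ⊆ ({x, y} : Finset V') := by
        intro v hv
        rw [Finset.mem_filter] at hv
        have := (hmem v hv.1).1
        rw [hv.2] at this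
        rw [Sym2.mem_iff] at this
        simpa using this
      calc {v ∈ s | f v = s(x, y)}.card ≤ ({x, y} : Finset V').card :=
            Finset.card_le_card hsub
        _ ≤ 2 := Finset.card_insert_le x {y} |>.trans (by simp)
  rwa [Set.ncard_eq_toFinset_card M.support, Set.ncard_eq_toFinset_card M.edgeSet]
lemma aux_step {V V' : Type*} [Fintype V] [Fintype V']
    (G : SimpleGraph V) (M : SimpleGraph V') (d n : ℕ)
    (hn' : Fintype.card V' = n)
    (hreg : ∀ v, (G.neighborSet v).ncard = d)
    (hmatch : ∀ v, (M.neighborSet v).ncard ≤ 1)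
    {a b : V'} (hab : M.Adj a b) :
    Nat.card {π : V ≃ V' // ∀ x y, M.Adj x y → G.Adj (π.symm x) (π.symm y)}
        * (n - M.support.ncard)
      ≤ d * Nat.card {π : V ≃ V' //
          ∀ x y, (M.deleteEdges {s(a, b)}).Adj x y → G.Adj (π.symm x) (π.symm y)} := by
  classical
  set M' := M.deleteEdges {s(a, b)} with hM'
  set C : Set V' := M.supportᶜ with hC
  -- neighbor set equivs
  have hEx : ∀ x : V, Nonempty (↥(G.neighborSet x) ≃ Fin d) := by
    intro x
    have : Nat.card ↥(G.neighborSet x) = d := by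
      rw [Nat.card_coe_set_eq, hreg]
    exact ⟨Finite.equivFinOfCardEq this⟩
  let E : ∀ x : V, ↥(G.neighborSet x) ≃ Fin d := fun x => (hEx x).some
  have hbsupp : b ∈ M.support := M.mem_support.mpr ⟨a, hab.symm⟩
  have hasupp : a ∈ M.support := M.mem_support.mpr ⟨b, hab⟩
  have hb' : ∀ w, ¬ M'.Adj b w := by
    intro w hw
    rw [hM', SimpleGraph.deleteEdges_adj] at hw
    apply hw.2
    have h1 : w ∈ M.neighborSet b := hw.1
    have h2 : a ∈ M.neighborSet b := hab.symm
    have := (Set.ncard_le_one (Set.toFinite _)).mp (hmatch b) w h1 a h2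
    simp [this]
  have hcC : ∀ c ∈ C, (∀ w, ¬ M.Adj c w) := by
    intro c hc w hw
    exact hc (M.mem_support.mpr ⟨w, hw⟩)
  -- the injection
  have hgoal : Nat.card ({π : V ≃ V' // ∀ x y, M.Adj x y → G.Adj (π.symm x) (π.symm y)} × ↥C)
      ≤ Nat.card ({π : V ≃ V' // ∀ x y, M'.Adj x y → G.Adj (π.symm x) (π.symm y)} × Fin d) := by
    have hgood' : ∀ (π : V ≃ V') (c : ↥C),
        (∀ x y, M.Adj x y → G.Adj (π.symm x) (π.symm y)) →
        ∀ x y, M'.Adj x y → G.Adj ((π.trans (Equiv.swap b (c : V'))).symm x)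
          ((π.trans (Equiv.swap b (c : V'))).symm y) := by
      intro π c hπ x y hxy
      have hxb : x ≠ b := fun h => hb' y (h ▸ hxy)
      have hyb : y ≠ b := fun h => hb' x (h ▸ hxy.symm)
      have hMxy : M.Adj x y := (SimpleGraph.deleteEdges_adj.mp hxy).1
      have hxc : x ≠ (c : V') := fun h => hcC _ c.2 y (h ▸ hMxy)
      have hyc : y ≠ (c : V') := fun h => hcC _ c.2 x (h ▸ hMxy.symm)
      have : ∀ z, z ≠ b → z ≠ (c : V') →
          (π.trans (Equiv.swap b (c : V'))).symm z = π.symm z := by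
        intro z h1 h2
        simp [Equiv.symm_trans_apply, Equiv.swap_apply_of_ne_of_ne h1 h2]
      rw [this x hxb hxc, this y hyb hyc]
      exact hπ x y hMxy
    have hmemN : ∀ (π : V ≃ V'),
        (∀ x y, M.Adj x y → G.Adj (π.symm x) (π.symm y)) →
        π.symm b ∈ G.neighborSet (π.symm a) := fun π hπ => hπ a b hab
    set F : ({π : V ≃ V' // ∀ x y, M.Adj x y → G.Adj (π.symm x) (π.symm y)} × ↥C) →
        ({π : V ≃ V' // ∀ x y, M'.Adj x y → G.Adj (π.symm x) (π.symm y)} × Fin d) :=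
      fun p => (⟨(p.1 : V ≃ V').trans (Equiv.swap b (p.2 : V')),
                  hgood' p.1 p.2 p.1.2⟩,
                E ((p.1 : V ≃ V').symm a) ⟨(p.1 : V ≃ V').symm b, hmemN _ p.1.2⟩) with hF
    refine Nat.card_le_card_of_injective F ?_
    rintro ⟨⟨π₁, h₁⟩, c₁⟩ ⟨⟨π₂, h₂⟩, c₂⟩ heq
    rw [hF, Prod.mk.injEq, Subtype.mk.injEq] at heq
    obtain ⟨he1, he2⟩ := heq
    have hab' : a ≠ b := hab.ne
    have hac : ∀ c : ↥C, a ≠ (c : V') := fun c h => (h ▸ c.2) hasupp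
    have hbc : ∀ c : ↥C, b ≠ (c : V') := fun c h => (h ▸ c.2) hbsupp
    have hxa : π₁.symm a = π₂.symm a := by
      have := congrArg (fun (e : V ≃ V') => e.symm a) he1
      simpa [Equiv.symm_trans_apply,
        Equiv.swap_apply_of_ne_of_ne hab' (hac c₁),
        Equiv.swap_apply_of_ne_of_ne hab' (hac c₂)] using this
    have hEinj : ∀ x y : V, x = y → ∀ (u : ↥(G.neighborSet x)) (v : ↥(G.neighborSet y)),
        E x u = E y v → (u : V) = (v : V) := by
      rintro x y rfl u v h
      exact congrArg Subtype.val ((E x).injective h)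
    have hxb : π₁.symm b = π₂.symm b := hEinj _ _ hxa _ _ he2
    have hc : (c₁ : V') = (c₂ : V') := by
      have h1 := congrArg (fun (e : V ≃ V') => e.symm (c₁ : V')) he1
      simp only [Equiv.symm_trans_apply] at h1
      by_cases hcc : (c₁ : V') = (c₂ : V')
      · exact hcc
      · rw [Equiv.symm_swap, Equiv.swap_apply_right, Equiv.symm_swap,
          Equiv.swap_apply_of_ne_of_ne (Ne.symm (hbc c₁)) hcc, hxb] at h1
        exact absurd (π₂.symm.injective h1) (hbc c₁)
    have hπ : π₁ = π₂ := by
      have : π₁.trans (Equiv.swap b (c₁ : V')) = π₂.trans (Equiv.swap b (c₂ : V')) := he1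
      rw [hc] at this
      ext v
      have := congrArg (fun (e : V ≃ V') => e v) this
      simpa using (Equiv.swap b (c₂ : V')).injective (by simpa using this)
    simp [Prod.ext_iff, Subtype.ext_iff, hπ, Subtype.coe_injective hc]
  -- cardinality computation
  rw [Nat.card_prod, Nat.card_prod, Nat.card_eq_fintype_card (α := Fin d),
    Fintype.card_fin] at hgoal
  have hC' : n - M.support.ncard ≤ Nat.card ↥C := by
    have h1 := Set.ncard_add_ncard_compl M.support (Set.toFinite _) (Set.toFinite _)
    rw [Nat.card_eq_fintype_card, hn'] at h1
    have h2 : Nat.card ↥C = (M.supportᶜ : Set V').ncard := by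
      rw [hC, Nat.card_coe_set_eq]
    omega
  exact le_trans (Nat.mul_le_mul_left _ hC') (hgoal.trans_eq (mul_comm _ _))

lemma aux_induction {V V' : Type*} [Fintype V] [Fintype V']
    (G : SimpleGraph V) (d n : ℕ)
    (hn' : Fintype.card V' = n) (hreg : ∀ v, (G.neighborSet v).ncard = d) :
    ∀ m : ℕ, ∀ M : SimpleGraph V', (∀ v, (M.neighborSet v).ncard ≤ 1) →
      M.edgeSet.ncard = m → 2 * m < n →
      (Nat.card {π : V ≃ V' // ∀ a b, M.Adj a b → G.Adj (π.symm a) (π.symm b)} : ℝ)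
        ≤ ((d : ℝ) / ((n : ℝ) - 2 * m)) ^ m * (Nat.card (V ≃ V') : ℝ) := by
  intro m
  induction m with
  | zero =>
    intro M hmatch hm hmn
    have h := Nat.card_le_card_of_injective
      (Subtype.val : {π : V ≃ V' // ∀ a b, M.Adj a b → G.Adj (π.symm a) (π.symm b)} → (V ≃ V'))
      Subtype.val_injective
    simp only [pow_zero, one_mul]
    exact_mod_cast h
  | succ m ih =>
    intro M hmatch hm hmn
    have hne : M.edgeSet.Nonempty := by
      rw [Set.nonempty_iff_ne_empty]
      intro h
      rw [h] at hm
      simp at hm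
    obtain ⟨e, he⟩ := hne
    induction e using Sym2.ind with
    | _ a b =>
    have hab : M.Adj a b := M.mem_edgeSet.mp he
    set M' := M.deleteEdges {s(a, b)} with hM'
    have hmatch' : ∀ v, (M'.neighborSet v).ncard ≤ 1 := by
      intro v
      refine le_trans (Set.ncard_le_ncard ?_ (Set.toFinite _)) (hmatch v)
      intro w hw
      exact (SimpleGraph.deleteEdges_adj.mp hw).1
    have hm' : M'.edgeSet.ncard = m := by
      rw [hM', SimpleGraph.edgeSet_deleteEdges]
      have := Set.ncard_diff_singleton_of_mem he
      simpa [hm] using this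
    have hmn' : 2 * m < n := by omega
    have ihM' := ih M' hmatch' hm' hmn'
    have hstep := aux_step G M d n hn' hreg hmatch hab
    rw [← hM'] at hstep
    have hs2 : M.support.ncard ≤ 2 * (m + 1) := by
      have := support_ncard_le M
      omega
    set A := Nat.card {π : V ≃ V' // ∀ x y, M.Adj x y → G.Adj (π.symm x) (π.symm y)} with hA
    set A' := Nat.card {π : V ≃ V' // ∀ x y, M'.Adj x y → G.Adj (π.symm x) (π.symm y)} with hA'
    have hnat : A * (n - 2 * (m + 1)) ≤ d * A' :=
      le_trans (Nat.mul_le_mul_left _ (Nat.sub_le_sub_left hs2 n)) hstep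
    have hle : (2 * (m + 1) : ℕ) ≤ n := le_of_lt hmn
    have hreal : (A : ℝ) * ((n : ℝ) - 2 * ((m : ℝ) + 1)) ≤ (d : ℝ) * (A' : ℝ) := by
      have := Nat.cast_le (α := ℝ) |>.mpr hnat
      push_cast [Nat.cast_sub hle] at this
      convert this using 2 <;> ring
    have hpos : (0 : ℝ) < (n : ℝ) - 2 * ((m : ℝ) + 1) := by
      have : ((2 * (m + 1) : ℕ) : ℝ) < (n : ℝ) := Nat.cast_lt.mpr hmn
      push_cast at this
      linarith
    have hpos' : (0 : ℝ) < (n : ℝ) - 2 * (m : ℝ) := by linarith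
    have h1 : (A : ℝ) ≤ (d : ℝ) / ((n : ℝ) - 2 * ((m : ℝ) + 1)) * (A' : ℝ) := by
      rw [div_mul_eq_mul_div, le_div_iff₀ hpos]
      linarith [hreal]
    have hmono : ((d : ℝ) / ((n : ℝ) - 2 * (m : ℝ))) ^ m
        ≤ ((d : ℝ) / ((n : ℝ) - 2 * ((m : ℝ) + 1))) ^ m := by
      refine pow_le_pow_left₀ (div_nonneg (Nat.cast_nonneg d) (le_of_lt hpos')) ?_ m
      exact div_le_div_of_nonneg_left (Nat.cast_nonneg d) hpos (by linarith)
    have hdiv0 : (0 : ℝ) ≤ (d : ℝ) / ((n : ℝ) - 2 * ((m : ℝ) + 1)) :=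
      div_nonneg (Nat.cast_nonneg d) (le_of_lt hpos)
    have h2 : (A' : ℝ) ≤ ((d : ℝ) / ((n : ℝ) - 2 * ((m : ℝ) + 1))) ^ m
        * (Nat.card (V ≃ V') : ℝ) := by
      refine le_trans ihM' ?_
      have : ((d : ℝ) / ((n : ℝ) - 2 * (m : ℝ))) ^ m ≤ _ := hmono
      exact mul_le_mul_of_nonneg_right hmono (Nat.cast_nonneg _)
    calc (A : ℝ) ≤ (d : ℝ) / ((n : ℝ) - 2 * ((m : ℝ) + 1)) * (A' : ℝ) := h1
      _ ≤ (d : ℝ) / ((n : ℝ) - 2 * ((m : ℝ) + 1)) *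
          (((d : ℝ) / ((n : ℝ) - 2 * ((m : ℝ) + 1))) ^ m * (Nat.card (V ≃ V') : ℝ)) :=
            mul_le_mul_of_nonneg_left h2 hdiv0
      _ = ((d : ℝ) / ((n : ℝ) - 2 * ((m : ℝ) + 1))) ^ (m + 1) * (Nat.card (V ≃ V') : ℝ) := by
            ring
      _ = ((d : ℝ) / ((n : ℝ) - 2 * ((m + 1 : ℕ) : ℝ))) ^ (m + 1) * (Nat.card (V ≃ V') : ℝ) := by
            push_cast
            ring

/-- Let `G` be `d`-regular on `n` vertices and `M` a matching with `m` edges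
    on a vertex set of size `n`.  For a uniformly random bijection `π`, the
    probability that every edge of `M` pulls back to an edge of `G` is at most
    `(d/(n - 2m))^m`; equivalently, the number of such bijections is at most
    `(d/(n - 2m))^m` times the total number of bijections. -/
theorem matching_embedding_probability {V V' : Type*} [Fintype V] [Fintype V']
    (G : SimpleGraph V) (M : SimpleGraph V') (d n m : ℕ) (hd : 1 ≤ d)
    (hn : Fintype.card V = n) (hn' : Fintype.card V' = n)
    (hreg : ∀ v, (G.neighborSet v).ncard = d)
    (hmatch : ∀ v, (M.neighborSet v).ncard ≤ 1)
    (hm : M.edgeSet.ncard = m) (hmn : 2 * m < n) :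
    (Nat.card {π : V ≃ V' //
        ∀ a b, M.Adj a b → G.Adj (π.symm a) (π.symm b)} : ℝ)
      ≤ ((d : ℝ) / ((n : ℝ) - 2 * m)) ^ m * (Nat.card (V ≃ V') : ℝ) := by
  exact aux_induction G d n hn' hreg m M hmatch hm hmn
end
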